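/- In a 1-writer program, if two outer blocks b_r and b_w of different threads are in conflict via variable x — i.e., the last write to x in b_w is w(x,d′) and b_r contains a read r(x,d) with d ≠ d′ — then in every sequentially consistent interleaving in which each block appears contiguously and outer blocks are the last blocks of their threads, all events of b_r on that read occur before the last write to x in b_w; in particular b_r's conflicting read precedes b_w's last write to x. -/

import Mathlib

/-- Memory events: reads and writes of natural-number values to variables of type `V`. -/
inductive Event (V : Type) where
  | read  (x : V) (d : ℕ)
  | write (x : V) (d : ℕ)
deriving DecidableEq

variable {V ι : Type}

/-- A sequence of events is sequentially consistent (SC): every read `r(x,d)` has a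
preceding write `w(x,d)` with no write of a different value to `x` in between. -/
def SC (σ : List (Event V)) : Prop :=
  ∀ p x d, σ[(p : ℕ)]? = some (Event.read x d) →
    ∃ q, q < p ∧ σ[q]? = some (Event.write x d) ∧
      ∀ r, q < r → r < p → ∀ d', d' ≠ d → σ[r]? ≠ some (Event.write x d')

/-- `σ` is an interleaving of the given threads: its restriction to each
thread identifier equals that thread's event sequence. -/
def IsInterleaving [DecidableEq ι] (threads : ι → List (Event V)) (σ : List (ι × Event V)) : Prop :=
  ∀ i, σ.filterMap (fun a => if a.1 = i then some a.2 else none) = threads i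

/-- A preemption occurs at position `j`: the events at `j` and `j+1` are from
different threads and the event at `j` is not the last event of its thread. -/
def PreemptionAt (σ : List (ι × Event V)) (j : ℕ) : Prop :=
  ∃ a b, σ[j]? = some a ∧ σ[j + 1]? = some b ∧ a.1 ≠ b.1 ∧
    ∃ r c, j < r ∧ σ[r]? = some c ∧ c.1 = a.1

open Classical in
/-- The number of preemption positions of `σ`. -/
noncomputable def numPreemptions (σ : List (ι × Event V)) : ℕ :=
  ((Finset.range σ.length).filter fun j => PreemptionAt σ j).card

open Classical in
/-- The number of context switches of `σ` (adjacent events of different threads). -/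
noncomputable def numSwitches (σ : List (ι × Event V)) : ℕ :=
  ((Finset.range σ.length).filter fun j =>
    ∃ a b, σ[j]? = some a ∧ σ[j + 1]? = some b ∧ a.1 ≠ b.1).card

/-- The (increasing) list of positions of `σ` carrying events of thread `i`. -/
def threadPositions [DecidableEq ι] (σ : List (ι × Event V)) (i : ι) : List ℕ :=
  (List.range σ.length).filter fun p => decide ((σ[p]?).map Prod.fst = some i)

/-- The position in `σ` of the `j`-th event of thread `i`. -/
def posOf [DecidableEq ι] (σ : List (ι × Event V)) (i : ι) (j : ℕ) : ℕ :=
  (threadPositions σ i).getD j 0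

/-- All events of thread `t` occur before all events of thread `t'` in `σ`. -/
def ThreadBefore [DecidableEq ι] (σ : List (ι × Event V)) (t t' : ι) : Prop :=
  ∀ p ∈ threadPositions σ t, ∀ q ∈ threadPositions σ t', p < q

/-- The event is a write to variable `x`. -/
def writesTo (x : V) : Event V → Prop
  | Event.write y _ => y = x
  | _ => False

/-- A 1-writer program: for each variable, a single thread performs all writes to it. -/
def OneWriter (threads : ι → List (Event V)) : Prop :=
  ∀ x i i', (∃ e ∈ threads i, writesTo x e) → (∃ e ∈ threads i', writesTo x e) → i = i'

/-- The events of thread `i` from its index `s` onwards appear contiguously in `σ`. -/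
def ContiguousFrom [DecidableEq ι] (σ : List (ι × Event V)) (i : ι) (s : ℕ) : Prop :=
  ∀ j, s ≤ j → j + 1 < (threadPositions σ i).length → posOf σ i (j + 1) = posOf σ i j + 1

/-- Conflict-graph edge `tr → tw` between outer blocks (suffixes of the threads
starting at indices `s tr`, `s tw`): the last write to some variable `x` in the
outer block of `tw` conflicts with a read of `x` in the outer block of `tr`. -/
def ConflictEdge [DecidableEq ι] (threads : ι → List (Event V)) (s : ι → ℕ) (tr tw : ι) : Prop :=
  tr ≠ tw ∧ ∃ x d d' jr jw, d ≠ d' ∧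
    s tr ≤ jr ∧ (threads tr)[jr]? = some (Event.read x d) ∧
    s tw ≤ jw ∧ (threads tw)[jw]? = some (Event.write x d') ∧
    ∀ j d'', jw < j → (threads tw)[j]? ≠ some (Event.write x d'')

/-- Splitting a list into contiguous blocks immediately after each position in `cut`. -/
def splitAtCuts {α : Type} (l : List α) (cut : Finset ℕ) : List (List α) :=
  let cs := cut.sort (· ≤ ·)
  ((0 :: cs.map (· + 1)).zip (cs.map (· + 1) ++ [l.length])).map fun p => (l.take p.2).drop p.1


section Helpers
variable {V ι : Type}

theorem tp_cons [DecidableEq ι] (a : ι × Event V) (σ : List (ι × Event V)) (i : ι) :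
    threadPositions (a :: σ) i =
      (if a.1 = i then [0] else []) ++ (threadPositions σ i).map (· + 1) := by
  unfold threadPositions
  rw [List.length_cons, List.range_succ_eq_map, List.filter_cons, List.filter_map]
  simp only [List.getElem?_cons_zero, Option.map_some, List.getElem?_cons_succ, Function.comp]
  by_cases h : a.1 = i <;> simp [h, Function.comp_def, Nat.succ_eq_add_one]

theorem tp_len [DecidableEq ι] (σ : List (ι × Event V)) (i : ι) :
    (threadPositions σ i).length =
      (σ.filterMap (fun a => if a.1 = i then some a.2 else none)).length := by
  induction σ with
  | nil => rfl
  | cons a σ ih =>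
      rw [tp_cons, List.filterMap_cons]
      by_cases h : a.1 = i <;> simp [h, ih]

theorem tp_spec [DecidableEq ι] (σ : List (ι × Event V)) (i : ι) :
    ∀ (j p : ℕ), (threadPositions σ i)[j]? = some p →
      ∃ e, σ[p]? = some (i, e) ∧
        (σ.filterMap (fun a => if a.1 = i then some a.2 else none))[j]? = some e := by
  induction σ with
  | nil => intro j p h; simp [threadPositions] at h
  | cons a σ ih =>
      intro j p h
      rw [tp_cons] at h
      rw [List.filterMap_cons]
      by_cases ha : a.1 = i
      · rw [if_pos ha, List.singleton_append] at h
        rw [ha, if_pos rfl]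
        cases j with
        | zero =>
            rw [List.getElem?_cons_zero, Option.some_inj] at h
            subst h
            exact ⟨a.2, by simp [← ha], rfl⟩
        | succ j =>
            rw [List.getElem?_cons_succ] at h
            rw [List.getElem?_cons_succ]
            rw [List.getElem?_map] at h
            cases hpp : (threadPositions σ i)[j]? with
            | none => rw [hpp] at h; simp at h
            | some p' =>
                rw [hpp] at h
                simp only [Option.map_some, Option.some_inj] at h
                obtain ⟨e, he, hf⟩ := ih j p' hpp
                exact ⟨e, by rw [← h]; simpa using he, hf⟩
      · rw [if_neg ha, List.nil_append] at h
        rw [if_neg ha]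
        rw [List.getElem?_map] at h
        cases hpp : (threadPositions σ i)[j]? with
        | none => rw [hpp] at h; simp at h
        | some p' =>
            rw [hpp] at h
            simp only [Option.map_some, Option.some_inj] at h
            obtain ⟨e, he, hf⟩ := ih j p' hpp
            exact ⟨e, by rw [← h]; simpa using he, hf⟩

theorem mem_tp [DecidableEq ι] {σ : List (ι × Event V)} {q : ℕ} {t : ι} {e : Event V}
    (h : σ[q]? = some (t, e)) : q ∈ threadPositions σ t := by
  have hq : q < σ.length := by
    by_contra hq
    rw [List.getElem?_eq_none (le_of_not_gt hq)] at h; simp at h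
  simp only [threadPositions, List.mem_filter, List.mem_range]
  exact ⟨hq, by simp [h]⟩

theorem tp_sorted [DecidableEq ι] (σ : List (ι × Event V)) (i : ι) :
    List.Pairwise (· < ·) (threadPositions σ i) :=
  List.Pairwise.sublist List.filter_sublist List.pairwise_lt_range

theorem sorted_index_lt {l : List ℕ} (hs : List.Pairwise (· < ·) l) {j j' p q : ℕ}
    (hj : l[j]? = some p) (hj' : l[j']? = some q) (h : p < q) : j < j' := by
  by_contra hle
  push_neg at hle
  obtain ⟨hjl, rfl⟩ := List.getElem?_eq_some_iff.1 hj
  obtain ⟨hj'l, rfl⟩ := List.getElem?_eq_some_iff.1 hj'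
  rcases hle.lt_or_eq with h1 | h1
  · have := List.pairwise_iff_getElem.1 hs j' j hj'l hjl h1
    omega
  · subst h1
    omega

theorem posOf_spec [DecidableEq ι] {threads : ι → List (Event V)} {σ : List (ι × Event V)}
    (hσ : IsInterleaving threads σ) (i : ι) (j : ℕ) (e : Event V)
    (h : (threads i)[j]? = some e) :
    (threadPositions σ i)[j]? = some (posOf σ i j) ∧
      σ[posOf σ i j]? = some (i, e) := by
  have hlen : j < (threadPositions σ i).length := by
    rw [tp_len, hσ i]
    exact (List.getElem?_eq_some_iff.1 h).1
  obtain ⟨p, hp⟩ : ∃ p, (threadPositions σ i)[j]? = some p :=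
    ⟨_, List.getElem?_eq_getElem hlen⟩
  have hpos : posOf σ i j = p := by
    have h0 : posOf σ i j = ((threadPositions σ i)[j]?).getD 0 := rfl
    rw [h0, hp]; rfl
  obtain ⟨e', he', hf'⟩ := tp_spec σ i j p hp
  rw [hσ i, h] at hf'
  rw [hpos]
  exact ⟨hp, by rw [he']; simp at hf'; rw [hf']⟩

end Helpers

/-- in a 1-writer program, if outer blocks `b_r` (suffix of thread `tr`
from `sr`) and `b_w` (suffix of thread `tw` from `sw`) conflict via variable `x` —
the last write to `x` in `b_w` is `w(x,d')` and `b_r` contains a read `r(x,d)` with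
`d ≠ d'` — then in every SC interleaving in which the blocks appear contiguously, the
conflicting read of `b_r` occurs before the last write to `x` of `b_w`. -/
theorem stmt4 {V : Type} (k : ℕ) (threads : Fin k → List (Event V))
    (hw : OneWriter threads)
    (tr tw : Fin k) (hne : tr ≠ tw) (sr sw : ℕ)
    (x : V) (d d' : ℕ) (jr jw : ℕ) (hd : d ≠ d')
    (hjr : sr ≤ jr) (hread : (threads tr)[jr]? = some (Event.read x d))
    (hjw : sw ≤ jw) (hwrite : (threads tw)[jw]? = some (Event.write x d'))
    (hlast : ∀ j d'', jw < j → (threads tw)[j]? ≠ some (Event.write x d''))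
    (σ : List (Fin k × Event V))
    (hσ : IsInterleaving threads σ)
    (hsc : SC (σ.map Prod.snd))
    (hcr : ContiguousFrom σ tr sr) (hcw : ContiguousFrom σ tw sw) :
    posOf σ tr jr < posOf σ tw jw := by
  obtain ⟨hAr, hr⟩ := posOf_spec hσ tr jr _ hread
  obtain ⟨hAw, hwpos⟩ := posOf_spec hσ tw jw _ hwrite
  by_contra hcon
  push_neg at hcon
  have hpw : posOf σ tw jw < posOf σ tr jr :=
    lt_of_le_of_ne hcon (by intro h; rw [h, hr] at hwpos; simp at hwpos)
  have hmap : (σ.map Prod.snd)[posOf σ tr jr]? = some (Event.read x d) := by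
    rw [List.getElem?_map, hr]; rfl
  obtain ⟨q, hq, hqw, hbet⟩ := hsc (posOf σ tr jr) x d hmap
  have hwmap : (σ.map Prod.snd)[posOf σ tw jw]? = some (Event.write x d') := by
    rw [List.getElem?_map, hwpos]; rfl
  have hqpw : posOf σ tw jw < q := by
    rcases lt_trichotomy q (posOf σ tw jw) with h1 | h1 | h1
    · exact absurd hwmap (hbet _ h1 hpw d' (Ne.symm hd))
    · rw [← h1, hqw] at hwmap; simp at hwmap; exact absurd hwmap hd
    · exact h1
  have hql : q < σ.length := by
    have hp : posOf σ tr jr < σ.length := (List.getElem?_eq_some_iff.1 hr).1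
    omega
  obtain ⟨⟨t, e⟩, hqσ⟩ : ∃ a, σ[q]? = some a := ⟨_, List.getElem?_eq_getElem hql⟩
  have he : e = Event.write x d := by
    rw [List.getElem?_map, hqσ] at hqw; simpa using hqw
  subst he
  obtain ⟨⟨j, hjlen⟩, hj⟩ := List.get_of_mem (mem_tp hqσ)
  have hj' : (threadPositions σ t)[j]? = some q := by
    rw [List.getElem?_eq_getElem hjlen, ← hj]; rfl
  obtain ⟨e', he', hf'⟩ := tp_spec σ t j q hj'
  rw [hqσ] at he'
  obtain rfl : e' = Event.write x d := by simpa using he'.symm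
  rw [hσ t] at hf'
  have htw : t = tw :=
    hw x t tw ⟨_, List.mem_of_getElem? hf', rfl⟩ ⟨_, List.mem_of_getElem? hwrite, rfl⟩
  subst htw
  exact hlast j d (sorted_index_lt (tp_sorted σ t) hAw hj' hqpw) hf'
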